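/- Suppose f is a real-valued function defined on an interval I containing the origin such that the restriction of f to I ∩ [0,∞) is convex and f(−x) = −f(x) whenever both x and −x belong to I. Then for every family of points a_1, …, a_n in I and every family of weights p_1, …, p_n ∈ [0,∞) with Σ_{k=1}^n p_k = 1 and Σ_{k=1}^n p_k a_k + min{a_1, …, a_n} ≥ 0, one has f(Σ_{k=1}^n p_k a_k) ≤ Σ_{k=1}^n p_k f(a_k). -/

import Mathlib

open Finset

/-- Corollary 2 (discrete version of Theorem 1): Jensen's inequality for an odd
function convex on `I ∩ [0, ∞)`, under the constraint
`Σ p_k a_k + min_k a_k ≥ 0`. -/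
theorem jensen_discrete_odd
    (I : Set ℝ) (hI : Convex ℝ I) (h0 : (0 : ℝ) ∈ I)
    (f : ℝ → ℝ)
    (hconv : ConvexOn ℝ (I ∩ Set.Ici 0) f)
    (hodd : ∀ x : ℝ, x ∈ I → -x ∈ I → f (-x) = -f x)
    (n : ℕ) (hn : 0 < n)
    (a : Fin n → ℝ) (ha : ∀ k, a k ∈ I)
    (p : Fin n → ℝ) (hp : ∀ k, 0 ≤ p k)
    (hp_sum : ∑ k, p k = 1)
    (hmin : 0 ≤ (∑ k, p k * a k) +
      Finset.univ.inf' (Finset.univ_nonempty_iff.mpr ⟨⟨0, hn⟩⟩) a) :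
    f (∑ k, p k * a k) ≤ ∑ k, p k * f (a k) := by
  classical
  set ne : (Finset.univ : Finset (Fin n)).Nonempty :=
    Finset.univ_nonempty_iff.mpr ⟨⟨0, hn⟩⟩ with hne
  set m : ℝ := Finset.univ.inf' ne a with hm
  set S : ℝ := ∑ k, p k * a k with hS
  have hmle : ∀ k, m ≤ a k := fun k => Finset.inf'_le a (Finset.mem_univ k)
  -- Case 1: all points nonnegative
  by_cases hm0 : 0 ≤ m
  · have := hconv.map_sum_le (t := Finset.univ) (w := p) (p := a)
      (fun i _ => hp i) hp_sum
      (fun i _ => ⟨ha i, le_trans hm0 (hmle i)⟩)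
    simpa [smul_eq_mul] using this
  push_neg at hm0
  -- Now m < 0, so S ≥ -m > 0
  have hSpos : 0 < S := lt_of_lt_of_le (by linarith) (by linarith)
  have hSI : S ∈ I := by
    have := hI.sum_mem (t := Finset.univ) (fun i _ => hp i) hp_sum (fun i _ => ha i)
    simpa [smul_eq_mul] using this
  have hIccI : Set.Icc (0:ℝ) S ⊆ I := fun x hx =>
    hI.ordConnected.out h0 hSI ⟨hx.1, hx.2⟩
  have hf0 : f 0 = 0 := by
    have := hodd 0 h0 (by simpa using h0)
    simp at this; linarith
  have hSmem : S ∈ I ∩ Set.Ici 0 := ⟨hSI, le_of_lt hSpos⟩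
  have h0mem : (0:ℝ) ∈ I ∩ Set.Ici 0 := ⟨h0, Set.mem_Ici.mpr le_rfl⟩
  -- chord bound on [0,S] : f x ≤ (x/S) * f S for x ∈ [0,S]
  have chord : ∀ x : ℝ, 0 ≤ x → x ≤ S → f x ≤ (x / S) * f S := by
    intro x hx0 hxS
    have ht0 : 0 ≤ x / S := div_nonneg hx0 hSpos.le
    have ht1 : x / S ≤ 1 := (div_le_one hSpos).2 hxS
    have hx' : (1 - x / S) • (0:ℝ) + (x / S) • S = x := by
      rw [smul_zero, zero_add, smul_eq_mul, div_mul_cancel₀ _ hSpos.ne']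
    have := hconv.2 h0mem hSmem (show (0:ℝ) ≤ 1 - x / S by linarith) ht0
      (show (1 - x / S) + x / S = 1 by ring)
    rw [hx'] at this
    simpa [hf0, smul_eq_mul] using this
  -- the slope used for the supporting line
  set g : Fin n → ℝ := fun k =>
    if 0 ≤ a k ∧ a k < S then (f S - f (a k)) / (S - a k) else f S / S with hg
  set c : ℝ := Finset.univ.sup' ne g with hc
  -- each g value is a slope (f S - f x)/(S - x) for some x ∈ I ∩ [0,S)
  have hgslope : ∀ k, ∃ x, x ∈ I ∧ 0 ≤ x ∧ x < S ∧ g k = (f S - f x) / (S - x) := by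
    intro k
    by_cases h : 0 ≤ a k ∧ a k < S
    · exact ⟨a k, ha k, h.1, h.2, by simp [hg, h]⟩
    · refine ⟨0, h0, le_refl 0, hSpos, ?_⟩
      simp [hg, h, hf0]
  -- key pointwise inequality: f S + c * (a k - S) ≤ f (a k)
  have key : ∀ k, f S + c * (a k - S) ≤ f (a k) := by
    intro k
    rcases lt_trichotomy (a k) S with hlt | heq | hgt
    · rcases lt_or_ge (a k) 0 with hneg | hpos
      · -- a k < 0 : use oddness
        have hmk : -a k ≤ S := by
          have := hmle k; linarith
        have hnI : -a k ∈ I := hIccI ⟨by linarith, hmk⟩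
        have hoddk := hodd (a k) (ha k) hnI
        have hch := chord (-a k) (by linarith) hmk
        -- f (a k) = - f(-a k) ≥ -(-a k / S) f S = (a k / S) f S
        have hfa : (a k / S) * f S ≤ f (a k) := by
          have : f (a k) = - f (-a k) := by
            have h2 := hodd (-a k) hnI (by simpa using ha k)
            simp at h2; linarith
          rw [this]
          have : (-a k / S) * f S ≥ f (-a k) := hch
          have hdiv : a k / S = -(-a k / S) := by ring
          rw [hdiv]; linarith
        -- need c ≥ f S / S, from g k = f S / S
        have hck : f S / S ≤ c := by
          have : g k = f S / S := by
            simp [hg, not_and_of_not_left _ (not_le.2 hneg)]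
          rw [← this]
          exact Finset.le_sup' g (Finset.mem_univ k)
        have haS : a k - S < 0 := by linarith
        have h1 : c * (a k - S) ≤ (f S / S) * (a k - S) :=
          mul_le_mul_of_nonpos_right hck haS.le
        have h2 : (f S / S) * (a k - S) = (a k / S) * f S - f S := by
          field_simp
        linarith
      · -- 0 ≤ a k < S : use c ≥ slope(a k, S)
        have hck : (f S - f (a k)) / (S - a k) ≤ c := by
          have : g k = (f S - f (a k)) / (S - a k) := by
            simp [hg, hpos, hlt]
          rw [← this]
          exact Finset.le_sup' g (Finset.mem_univ k)
        have hSa : 0 < S - a k := by linarith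
        have := (div_le_iff₀ hSa).1 hck
        nlinarith
    · simp [heq]
    · -- a k > S : c ≤ slope(S, a k)
      have hak : a k ∈ I ∩ Set.Ici 0 := ⟨ha k, Set.mem_Ici.mpr (by linarith)⟩
      have hcle : c ≤ (f (a k) - f S) / (a k - S) := by
        rw [hc]
        apply Finset.sup'_le
        intro j _
        obtain ⟨x, hxI, hx0, hxS, hgj⟩ := hgslope j
        rw [hgj]
        exact hconv.slope_mono_adjacent ⟨hxI, hx0⟩ hak hxS hgt
      have haS : 0 < a k - S := by linarith
      have := (le_div_iff₀ haS).1 hcle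
      nlinarith
  -- sum up
  have hsum : ∑ k, p k * (f S + c * (a k - S)) ≤ ∑ k, p k * f (a k) :=
    Finset.sum_le_sum fun k _ => mul_le_mul_of_nonneg_left (key k) (hp k)
  clear_value S m
  have hexp : ∑ k, p k * (f S + c * (a k - S)) = f S := by
    have h1 : ∀ k ∈ Finset.univ, p k * (f S + c * (a k - S))
        = p k * f S + c * (p k * a k) - (c * S) * p k := fun k _ => by ring
    rw [Finset.sum_congr rfl h1, Finset.sum_sub_distrib, Finset.sum_add_distrib,
      ← Finset.mul_sum, ← Finset.mul_sum, ← Finset.sum_mul, ← hS, hp_sum]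
    ring
  linarith [hsum, hexp]
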